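/- Let N = N^v(r) ∂_v + N^r(r) ∂_r be a vector field on extreme Reissner–Nordström that is timelike at the horizon r = M, i.e. g(N, N)|_{r=M} = 2 N^v(M) N^r(M) < 0 with N future directed (N^v > 0). Then N^r(M) ≠ 0, and consequently in the bulk current K^N [ψ] = F_{vv}(∂_v ψ)² + F_{rr}(∂_r ψ)² + F_∇ |∇ψ|² + F_{vr}(∂_v ψ)(∂_r ψ), the coefficient F_{rr} = D[(∂_r N^r)/2 − N^r/r] − N^r D'/2 vanishes at r = M while F_{vr} = D ∂_r N^v − 2N^r/r equals −2N^r(M)/M ≠ 0 at r = M. Hence K^N[ψ] is linear in ∂_r ψ at r = M and fails to be non-negative definite there: there exist values of (∂_v ψ, ∂_r ψ, |∇ψ|) making K^N negative at r = M. -/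

import Mathlib

/-- No redshift vector field on the degenerate horizon: for any future-directed
timelike φ_τ^T-invariant N = N^v∂_v + N^r∂_r, the bulk term K^N fails to be
non-negative definite at r = M. -/
theorem no_redshift_current (M : ℝ) (hM : 0 < M) (Nv Nr : ℝ → ℝ)
    (hNv : Differentiable ℝ Nv) (hNr : Differentiable ℝ Nr)
    (hfuture : 0 < Nv M) (htimelike : 2 * Nv M * Nr M < 0)
    (D Fvv Frr Fgrad Fvr : ℝ → ℝ)
    (hD : ∀ r, D r = (1 - M / r) ^ 2)
    (hFvv : ∀ r, Fvv r = deriv Nv r)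
    (hFrr : ∀ r, Frr r = D r * (deriv Nr r / 2 - Nr r / r) - Nr r * deriv D r / 2)
    (hFgrad : ∀ r, Fgrad r = -(1 / 2) * deriv Nr r)
    (hFvr : ∀ r, Fvr r = D r * deriv Nv r - 2 * Nr r / r) :
    Nr M ≠ 0 ∧ Frr M = 0 ∧ Fvr M = -2 * Nr M / M ∧ Fvr M ≠ 0 ∧
      ∃ a b c : ℝ,
        Fvv M * a ^ 2 + Frr M * b ^ 2 + Fgrad M * c ^ 2 + Fvr M * (a * b) < 0 := by
  have hMne : (M : ℝ) ≠ 0 := ne_of_gt hM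
  have hNrM : Nr M < 0 := by
    by_contra h
    push_neg at h
    nlinarith
  have hNrne : Nr M ≠ 0 := ne_of_lt hNrM
  have hDM : D M = 0 := by
    rw [hD, div_self hMne]; ring
  -- derivative of D at M
  have hDfun : D = fun r => (1 - M * r⁻¹) ^ 2 := by
    funext r; rw [hD, div_eq_mul_inv]
  have hderiv : HasDerivAt D 0 M := by
    rw [hDfun]
    have h1 : HasDerivAt (fun r : ℝ => 1 - M * r⁻¹) (-(M * (-(M ^ 2)⁻¹))) M :=
      (((hasDerivAt_inv hMne).const_mul M).const_sub 1)
    have h2 := h1.fun_pow 2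
    simpa [mul_inv_cancel₀ hMne] using h2
  have hD'M : deriv D M = 0 := hderiv.deriv
  have hFrrM : Frr M = 0 := by
    rw [hFrr, hDM, hD'M]; ring
  have hFvrM : Fvr M = -2 * Nr M / M := by
    rw [hFvr, hDM]; ring
  have hFvrpos : 0 < Fvr M := by
    rw [hFvrM]
    have : 0 < -2 * Nr M := by linarith
    positivity
  refine ⟨hNrne, hFrrM, hFvrM, ne_of_gt hFvrpos, 1, (-(Fvv M) - 1) / Fvr M, 0, ?_⟩
  rw [hFrrM]
  have : Fvr M * (1 * ((-(Fvv M) - 1) / Fvr M)) = -(Fvv M) - 1 := by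
    field_simp
  rw [this]
  ring_nf
  nlinarith [hFvrpos]
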